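/- (Kohler–Chandrasekaran; crossout is a subgame perfect equilibrium) Define the crossout strategy c by c(D) = m_n, the last morsel of the crossout sequence of D. Then for every finite dinner D with totally ordered preferences, every strategy s satisfies v_A^D(s,c) ≤ v_A^D(c,c) and v_B^D(s,c) ≤ v_B^D(c,c). -/

import Mathlib

open Finset

/-- One step of the crossout process: at Alice's steps remove the remaining morsel of
minimal first coordinate, at Bob's steps the one of minimal second coordinate. -/
noncomputable def coAux (turnA : Bool) (D : Finset (ℝ × ℝ)) : List (ℝ × ℝ) :=
  if h : D.Nonempty then
    (if turnA then (Finset.exists_min_image D Prod.fst h).choose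
      else (Finset.exists_min_image D Prod.snd h).choose) ::
      coAux (!turnA)
        (D.erase (if turnA then (Finset.exists_min_image D Prod.fst h).choose
          else (Finset.exists_min_image D Prod.snd h).choose))
  else []
termination_by D.card
decreasing_by
  apply Finset.card_erase_lt_of_mem
  split
  · exact (Finset.exists_min_image D Prod.fst h).choose_spec.1
  · exact (Finset.exists_min_image D Prod.snd h).choose_spec.1

/-- The crossout sequence of a dinner, as a list `[m₁, m₂, …, mₙ]`. -/
noncomputable def crossoutList (D : Finset (ℝ × ℝ)) : List (ℝ × ℝ) := coAux true D

/-- `crossout D i` is the `i`-th morsel `mᵢ` (1-indexed) of the crossout sequence of `D`. -/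
noncomputable def crossout (D : Finset (ℝ × ℝ)) (i : ℕ) : ℝ × ℝ :=
  (crossoutList D).getD (i - 1) (0, 0)

/-- Totally ordered preferences: distinct morsels have distinct first coordinates and
distinct second coordinates. -/
def TotallyOrderedPrefs (D : Finset (ℝ × ℝ)) : Prop :=
  (∀ p ∈ D, ∀ q ∈ D, p.1 = q.1 → p = q) ∧ (∀ p ∈ D, ∀ q ∈ D, p.2 = q.2 → p = q)

/-- Alice's crossout score: sum of first coordinates of the even-indexed crossout morsels. -/
noncomputable def chiA (D : Finset (ℝ × ℝ)) : ℝ :=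
  ∑ i ∈ Finset.Icc 1 D.card, if Even i then (crossout D i).1 else 0

/-- Bob's crossout score: sum of second coordinates of the odd-indexed crossout morsels. -/
noncomputable def chiB (D : Finset (ℝ × ℝ)) : ℝ :=
  ∑ i ∈ Finset.Icc 1 D.card, if Odd i then (crossout D i).2 else 0
/-- The crossout strategy: eat the last morsel of the crossout sequence. -/
noncomputable def crossoutStrategy (D : Finset (ℝ × ℝ)) : ℝ × ℝ := crossout D D.card

/-- Alice's score when she plays s and Bob plays t (Alice moves first iff |D| is even),
computed with fuel. -/
noncomputable def scoreA (s t : Finset (ℝ × ℝ) → ℝ × ℝ) : ℕ → Finset (ℝ × ℝ) → ℝ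
  | 0, _ => 0
  | fuel + 1, D =>
    if D.Nonempty then
      if Even D.card then (s D).1 + scoreA s t fuel (D.erase (s D))
      else scoreA s t fuel (D.erase (t D))
    else 0

/-- Bob's score when he plays s and Alice plays t (Bob moves first iff |D| is odd). -/
noncomputable def scoreB (s t : Finset (ℝ × ℝ) → ℝ × ℝ) : ℕ → Finset (ℝ × ℝ) → ℝ
  | 0, _ => 0
  | fuel + 1, D =>
    if D.Nonempty then
      if Odd D.card then (s D).2 + scoreB s t fuel (D.erase (s D))
      else scoreB s t fuel (D.erase (t D))
    else 0

/-- v_A^D(s,t): Alice plays s, Bob plays t. -/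
noncomputable def vA (s t : Finset (ℝ × ℝ) → ℝ × ℝ) (D : Finset (ℝ × ℝ)) : ℝ :=
  scoreA s t D.card D

/-- v_B^D(s,t): Bob plays s, Alice plays t. -/
noncomputable def vB (s t : Finset (ℝ × ℝ) → ℝ × ℝ) (D : Finset (ℝ × ℝ)) : ℝ :=
  scoreB s t D.card D

/-! ### Auxiliary development for the crossout equilibrium -/

/-- The minimal morsel in the relevant coordinate (fst if `b`, snd otherwise). -/
noncomputable def mmin (b : Bool) (D : Finset (ℝ × ℝ)) (h : D.Nonempty) : ℝ × ℝ :=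
  if b then (Finset.exists_min_image D Prod.fst h).choose
  else (Finset.exists_min_image D Prod.snd h).choose

/-- The relevant coordinate. -/
def mkey (b : Bool) (p : ℝ × ℝ) : ℝ := if b then p.1 else p.2

lemma mmin_mem (b : Bool) (D : Finset (ℝ × ℝ)) (h : D.Nonempty) : mmin b D h ∈ D := by
  unfold mmin; split
  · exact (Finset.exists_min_image D Prod.fst h).choose_spec.1
  · exact (Finset.exists_min_image D Prod.snd h).choose_spec.1

lemma mmin_le (b : Bool) (D : Finset (ℝ × ℝ)) (h : D.Nonempty) :
    ∀ x ∈ D, mkey b (mmin b D h) ≤ mkey b x := by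
  intro x hx
  unfold mmin mkey
  cases b with
  | false => simpa using (Finset.exists_min_image D Prod.snd h).choose_spec.2 x hx
  | true => simpa using (Finset.exists_min_image D Prod.fst h).choose_spec.2 x hx

lemma top_subset {D E : Finset (ℝ × ℝ)} (hE : E ⊆ D) (hD : TotallyOrderedPrefs D) :
    TotallyOrderedPrefs E :=
  ⟨fun p hp q hq => hD.1 p (hE hp) q (hE hq), fun p hp q hq => hD.2 p (hE hp) q (hE hq)⟩

lemma top_key_inj {D : Finset (ℝ × ℝ)} (hD : TotallyOrderedPrefs D) (b : Bool)
    {p q : ℝ × ℝ} (hp : p ∈ D) (hq : q ∈ D) (h : mkey b p = mkey b q) : p = q := by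
  cases b with
  | false => exact hD.2 p hp q hq h
  | true => exact hD.1 p hp q hq h

lemma mmin_eq (b : Bool) {D : Finset (ℝ × ℝ)} (h : D.Nonempty)
    (hD : TotallyOrderedPrefs D) {m : ℝ × ℝ} (hm : m ∈ D)
    (hmin : ∀ x ∈ D, mkey b m ≤ mkey b x) : mmin b D h = m := by
  refine top_key_inj hD b (mmin_mem b D h) hm ?_
  exact le_antisymm (mmin_le b D h m hm) (hmin _ (mmin_mem b D h))

lemma coAux_cons (b : Bool) (D : Finset (ℝ × ℝ)) (h : D.Nonempty) :
    coAux b D = mmin b D h :: coAux (!b) (D.erase (mmin b D h)) := by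
  rw [coAux, dif_pos h]; rfl

lemma coAux_empty (b : Bool) : coAux b ∅ = [] := by
  rw [coAux]; simp

lemma coAux_length : ∀ (n : ℕ) (b : Bool) (D : Finset (ℝ × ℝ)), D.card = n →
    (coAux b D).length = n := by
  intro n
  induction n with
  | zero =>
    intro b D hD
    rw [Finset.card_eq_zero] at hD; subst hD; rw [coAux_empty]; rfl
  | succ n ih =>
    intro b D hD
    have h : D.Nonempty := by rw [← Finset.card_pos, hD]; omega
    rw [coAux_cons b D h]
    have : (D.erase (mmin b D h)).card = n := by
      rw [Finset.card_erase_of_mem (mmin_mem b D h), hD]; omega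
    simp [ih (!b) _ this]

lemma coAux_subset : ∀ (n : ℕ) (b : Bool) (D : Finset (ℝ × ℝ)), D.card = n →
    ∀ x ∈ coAux b D, x ∈ D := by
  intro n
  induction n with
  | zero =>
    intro b D hD
    rw [Finset.card_eq_zero] at hD; subst hD; rw [coAux_empty]; simp
  | succ n ih =>
    intro b D hD x hx
    have h : D.Nonempty := by rw [← Finset.card_pos, hD]; omega
    rw [coAux_cons b D h] at hx
    rcases List.mem_cons.1 hx with rfl | hx
    · exact mmin_mem b D h
    · have hcard : (D.erase (mmin b D h)).card = n := by
        rw [Finset.card_erase_of_mem (mmin_mem b D h), hD]; omega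
      exact Finset.mem_of_mem_erase (ih (!b) _ hcard x hx)

/-- The last morsel of the crossout sequence. -/
noncomputable def lastM (b : Bool) (D : Finset (ℝ × ℝ)) : ℝ × ℝ :=
  (coAux b D).getD (D.card - 1) ((0 : ℝ), (0 : ℝ))

lemma lastM_mem (b : Bool) (D : Finset (ℝ × ℝ)) (h : D.Nonempty) : lastM b D ∈ D := by
  have hlen : (coAux b D).length = D.card := coAux_length D.card b D rfl
  have hpos : 0 < D.card := Finset.card_pos.2 h
  have hlt : D.card - 1 < (coAux b D).length := by omega
  unfold lastM
  rw [List.getD_eq_getElem _ _ hlt]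
  exact coAux_subset D.card b D rfl _ (List.getElem_mem hlt)

lemma lastM_step (b : Bool) (D : Finset (ℝ × ℝ)) (h : D.Nonempty) (h2 : 2 ≤ D.card) :
    lastM b D = lastM (!b) (D.erase (mmin b D h)) := by
  obtain ⟨k, hk⟩ : ∃ k, D.card = k + 2 := ⟨D.card - 2, by omega⟩
  unfold lastM
  rw [coAux_cons b D h, Finset.card_erase_of_mem (mmin_mem b D h), hk]
  show (mmin b D h :: _).getD (k + 1) _ = _
  rw [List.getD_cons_succ]
  norm_num

lemma coAux_trunc : ∀ (n : ℕ) (b : Bool) (D : Finset (ℝ × ℝ)), TotallyOrderedPrefs D →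
    D.card = n → D.Nonempty →
    coAux b D = coAux b (D.erase (lastM b D)) ++ [lastM b D] := by
  intro n
  induction n with
  | zero =>
    intro b D _ hD hne
    exact absurd (Finset.card_pos.2 hne) (by omega)
  | succ n ih =>
    intro b D hD hcard hne
    set m := mmin b D hne with hm
    rcases Nat.eq_zero_or_pos n with rfl | hn
    · -- singleton case
      obtain ⟨a, ha⟩ := Finset.card_eq_one.1 hcard
      subst ha
      have hma : m = a := Finset.mem_singleton.1 (mmin_mem b _ hne)
      have h1 : coAux b {a} = [a] := by
        rw [coAux_cons b {a} hne, ← hm, hma]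
        simp [coAux_empty]
      have h2 : lastM b {a} = a := by
        unfold lastM; rw [h1]; simp
      rw [h1, h2]
      simp [coAux_empty]
    · -- card D = n+1 ≥ 2
      have h2 : 2 ≤ D.card := by omega
      set E := D.erase m with hE
      have hEcard : E.card = n := by
        rw [hE, Finset.card_erase_of_mem (mmin_mem b D hne), hcard]; omega
      have hEne : E.Nonempty := by rw [← Finset.card_pos, hEcard]; omega
      have hLst : lastM b D = lastM (!b) E := lastM_step b D hne h2
      set L := lastM b D with hL
      have hLE : L ∈ E := hLst ▸ lastM_mem (!b) E hEne
      have hLD : L ∈ D := Finset.mem_of_mem_erase hLE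
      have hLm : L ≠ m := Finset.ne_of_mem_erase hLE
      have hDLne : (D.erase L).Nonempty :=
        ⟨m, Finset.mem_erase.2 ⟨fun hc => hLm hc.symm, mmin_mem b D hne⟩⟩
      have hmin : mmin b (D.erase L) hDLne = m := by
        refine mmin_eq b hDLne (top_subset (Finset.erase_subset _ _) hD)
          (Finset.mem_erase.2 ⟨fun hc => hLm hc.symm, mmin_mem b D hne⟩) ?_
        intro x hx
        exact mmin_le b D hne x (Finset.mem_of_mem_erase hx)
      have hcomm : (D.erase L).erase m = E.erase L := by
        rw [hE]; exact Finset.erase_right_comm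
      have hih : coAux (!b) E = coAux (!b) (E.erase (lastM (!b) E)) ++ [lastM (!b) E] :=
        ih (!b) E (top_subset (Finset.erase_subset _ _) hD) hEcard hEne
      rw [coAux_cons b D hne, ← hm, coAux_cons b (D.erase L) hDLne, hmin, hcomm]
      rw [hih, ← hLst]
      simp

/-- Alice-type partial sum over a crossout list: first coordinates at `flag = false` steps. -/
noncomputable def lsA : Bool → List (ℝ × ℝ) → ℝ
  | _, [] => 0
  | b, x :: l => (if b then 0 else x.1) + lsA (!b) l

/-- Bob-type partial sum over a crossout list: second coordinates at `flag = true` steps. -/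
noncomputable def lsB : Bool → List (ℝ × ℝ) → ℝ
  | _, [] => 0
  | b, x :: l => (if b then x.2 else 0) + lsB (!b) l

/-- Flag of the last step of a crossout process of length `n` starting at flag `b`. -/
def lastFlag (b : Bool) (n : ℕ) : Bool := if Odd n then b else !b

lemma lastFlag_succ (b : Bool) (n : ℕ) : lastFlag b (n + 1) = lastFlag (!b) n := by
  unfold lastFlag
  rcases Nat.even_or_odd n with h | h
  · have h1 : Odd (n + 1) := Even.add_one h
    have h2 : ¬ Odd n := by simpa [Nat.not_odd_iff_even] using h
    simp [h1, h2]
  · have h1 : ¬ Odd (n + 1) := by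
      simpa [Nat.not_odd_iff_even] using Odd.add_one h
    simp [h1, h]

lemma lsA_append (x : ℝ × ℝ) : ∀ (L : List (ℝ × ℝ)) (b : Bool),
    lsA b (L ++ [x]) = lsA b L + (if lastFlag b (L.length + 1) then 0 else x.1) := by
  intro L
  induction L with
  | nil =>
    intro b
    simp only [List.nil_append, lsA, List.length_nil, zero_add]
    have : lastFlag b 1 = b := by simp [lastFlag]
    rw [this, add_zero]
  | cons y l ihl =>
    intro b
    simp only [List.cons_append, lsA]
    rw [ihl (!b)]
    have h : lastFlag b ((y :: l).length + 1) = lastFlag (!b) (l.length + 1) := by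
      rw [List.length_cons]; exact lastFlag_succ _ _
    simp only [h]
    ring

lemma lsB_append (x : ℝ × ℝ) : ∀ (L : List (ℝ × ℝ)) (b : Bool),
    lsB b (L ++ [x]) = lsB b L + (if lastFlag b (L.length + 1) then x.2 else 0) := by
  intro L
  induction L with
  | nil =>
    intro b
    simp only [List.nil_append, lsB, List.length_nil, zero_add]
    have : lastFlag b 1 = b := by simp [lastFlag]
    rw [this, add_zero]
  | cons y l ihl =>
    intro b
    simp only [List.cons_append, lsB]
    rw [ihl (!b)]
    have h : lastFlag b ((y :: l).length + 1) = lastFlag (!b) (l.length + 1) := by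
      rw [List.length_cons]; exact lastFlag_succ _ _
    simp only [h]
    ring

lemma keyA : ∀ (n : ℕ) (b : Bool) (D : Finset (ℝ × ℝ)) (q : ℝ × ℝ),
    TotallyOrderedPrefs D → q ∈ D → D.card = n →
    lsA b (coAux b (D.erase q)) + q.1 ≤
      lsA b (coAux b D) + (if lastFlag b n then (lastM b D).1 else 0) := by
  intro n
  induction n with
  | zero => intro b D q _ hq hc; exact absurd (Finset.card_pos.2 ⟨q, hq⟩) (by omega)
  | succ n ih =>
    intro b D q hD hq hc
    have hne : D.Nonempty := ⟨q, hq⟩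
    by_cases hqm : q = mmin b D hne
    · rcases Nat.eq_zero_or_pos n with rfl | hn
      · -- singleton
        obtain ⟨a, ha⟩ := Finset.card_eq_one.1 hc
        subst ha
        have hqa : q = a := Finset.mem_singleton.1 hq
        subst hqa
        have h1 : coAux b {q} = [q] := by
          rw [coAux_cons b {q} hne, ← hqm]
          simp [coAux_empty]
        have h2 : lastM b {q} = q := by unfold lastM; rw [h1]; simp
        have h3 : lastFlag b 1 = b := by simp [lastFlag]
        rw [Finset.erase_singleton, coAux_empty, h1, h2, h3]
        cases b <;> simp [lsA]
      · -- n ≥ 1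
        have hEne : (D.erase q).Nonempty := by
          rw [← Finset.card_pos, Finset.card_erase_of_mem hq, hc]; omega
        have hEcard : (D.erase q).card = n := by
          rw [Finset.card_erase_of_mem hq, hc]; omega
        have hD1 : coAux b D = q :: coAux (!b) (D.erase q) := by
          rw [coAux_cons b D hne, ← hqm]
        have hE1 : coAux b (D.erase q) =
            mmin b (D.erase q) hEne :: coAux (!b) ((D.erase q).erase (mmin b (D.erase q) hEne)) :=
          coAux_cons b (D.erase q) hEne
        have hm'E : mmin b (D.erase q) hEne ∈ D.erase q := mmin_mem b _ hEne
        have ihh := ih (!b) (D.erase q) (mmin b (D.erase q) hEne)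
          (top_subset (Finset.erase_subset _ _) hD) hm'E hEcard
        have h2 : 2 ≤ D.card := by omega
        have hLst : lastM b D = lastM (!b) (D.erase q) := by
          have := lastM_step b D hne h2
          rwa [← hqm] at this
        have hkey := mmin_le b D hne (mmin b (D.erase q) hEne)
          (Finset.mem_of_mem_erase hm'E)
        rw [← hqm] at hkey
        rw [hE1, hD1]
        simp only [lsA, lastFlag_succ b n, hLst]
        cases b with
        | false =>
          simp only [mkey] at hkey
          simp only [Bool.not_false] at ihh ⊢
          norm_num at hkey ihh ⊢
          linarith
        | true =>
          simp only [mkey] at hkey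
          simp only [Bool.not_true] at ihh ⊢
          norm_num at hkey ihh ⊢
          linarith
    · -- q is not the current minimum
      have hmq : mmin b D hne ≠ q := fun h => hqm h.symm
      have hmE : mmin b D hne ∈ D.erase q := Finset.mem_erase.2 ⟨hmq, mmin_mem b D hne⟩
      have hEne : (D.erase q).Nonempty := ⟨_, hmE⟩
      have hmin : mmin b (D.erase q) hEne = mmin b D hne :=
        mmin_eq b hEne (top_subset (Finset.erase_subset _ _) hD) hmE
          (fun x hx => mmin_le b D hne x (Finset.mem_of_mem_erase hx))
      have h2 : 2 ≤ D.card := Finset.one_lt_card.2 ⟨q, hq, mmin b D hne, mmin_mem b D hne, hqm⟩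
      have hqm' : q ∈ D.erase (mmin b D hne) := Finset.mem_erase.2 ⟨hqm, hq⟩
      have ihh := ih (!b) (D.erase (mmin b D hne)) q
        (top_subset (Finset.erase_subset _ _) hD) hqm'
        (by rw [Finset.card_erase_of_mem (mmin_mem b D hne), hc]; omega)
      have hcomm : (D.erase q).erase (mmin b D hne) = (D.erase (mmin b D hne)).erase q :=
        Finset.erase_right_comm
      have hLst : lastM b D = lastM (!b) (D.erase (mmin b D hne)) := lastM_step b D hne h2
      rw [coAux_cons b D hne, coAux_cons b (D.erase q) hEne, hmin, hcomm]
      simp only [lsA, lastFlag_succ b n, hLst]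
      linarith

lemma keyB : ∀ (n : ℕ) (b : Bool) (D : Finset (ℝ × ℝ)) (q : ℝ × ℝ),
    TotallyOrderedPrefs D → q ∈ D → D.card = n →
    lsB b (coAux b (D.erase q)) + q.2 ≤
      lsB b (coAux b D) + (if lastFlag b n then 0 else (lastM b D).2) := by
  intro n
  induction n with
  | zero => intro b D q _ hq hc; exact absurd (Finset.card_pos.2 ⟨q, hq⟩) (by omega)
  | succ n ih =>
    intro b D q hD hq hc
    have hne : D.Nonempty := ⟨q, hq⟩
    by_cases hqm : q = mmin b D hne
    · rcases Nat.eq_zero_or_pos n with rfl | hn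
      · obtain ⟨a, ha⟩ := Finset.card_eq_one.1 hc
        subst ha
        have hqa : q = a := Finset.mem_singleton.1 hq
        subst hqa
        have h1 : coAux b {q} = [q] := by
          rw [coAux_cons b {q} hne, ← hqm]
          simp [coAux_empty]
        have h2 : lastM b {q} = q := by unfold lastM; rw [h1]; simp
        have h3 : lastFlag b 1 = b := by simp [lastFlag]
        rw [Finset.erase_singleton, coAux_empty, h1, h2, h3]
        cases b <;> simp [lsB]
      · have hEne : (D.erase q).Nonempty := by
          rw [← Finset.card_pos, Finset.card_erase_of_mem hq, hc]; omega
        have hEcard : (D.erase q).card = n := by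
          rw [Finset.card_erase_of_mem hq, hc]; omega
        have hD1 : coAux b D = q :: coAux (!b) (D.erase q) := by
          rw [coAux_cons b D hne, ← hqm]
        have hE1 : coAux b (D.erase q) =
            mmin b (D.erase q) hEne :: coAux (!b) ((D.erase q).erase (mmin b (D.erase q) hEne)) :=
          coAux_cons b (D.erase q) hEne
        have hm'E : mmin b (D.erase q) hEne ∈ D.erase q := mmin_mem b _ hEne
        have ihh := ih (!b) (D.erase q) (mmin b (D.erase q) hEne)
          (top_subset (Finset.erase_subset _ _) hD) hm'E hEcard
        have h2 : 2 ≤ D.card := by omega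
        have hLst : lastM b D = lastM (!b) (D.erase q) := by
          have := lastM_step b D hne h2
          rwa [← hqm] at this
        have hkey := mmin_le b D hne (mmin b (D.erase q) hEne)
          (Finset.mem_of_mem_erase hm'E)
        rw [← hqm] at hkey
        rw [hE1, hD1]
        simp only [lsB, lastFlag_succ b n, hLst]
        cases b with
        | false =>
          simp only [mkey] at hkey
          simp only [Bool.not_false] at ihh ⊢
          norm_num at hkey ihh ⊢
          linarith
        | true =>
          simp only [mkey] at hkey
          simp only [Bool.not_true] at ihh ⊢
          norm_num at hkey ihh ⊢
          linarith
    · have hmq : mmin b D hne ≠ q := fun h => hqm h.symm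
      have hmE : mmin b D hne ∈ D.erase q := Finset.mem_erase.2 ⟨hmq, mmin_mem b D hne⟩
      have hEne : (D.erase q).Nonempty := ⟨_, hmE⟩
      have hmin : mmin b (D.erase q) hEne = mmin b D hne :=
        mmin_eq b hEne (top_subset (Finset.erase_subset _ _) hD) hmE
          (fun x hx => mmin_le b D hne x (Finset.mem_of_mem_erase hx))
      have h2 : 2 ≤ D.card := Finset.one_lt_card.2 ⟨q, hq, mmin b D hne, mmin_mem b D hne, hqm⟩
      have hqm' : q ∈ D.erase (mmin b D hne) := Finset.mem_erase.2 ⟨hqm, hq⟩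
      have ihh := ih (!b) (D.erase (mmin b D hne)) q
        (top_subset (Finset.erase_subset _ _) hD) hqm'
        (by rw [Finset.card_erase_of_mem (mmin_mem b D hne), hc]; omega)
      have hcomm : (D.erase q).erase (mmin b D hne) = (D.erase (mmin b D hne)).erase q :=
        Finset.erase_right_comm
      have hLst : lastM b D = lastM (!b) (D.erase (mmin b D hne)) := lastM_step b D hne h2
      rw [coAux_cons b D hne, coAux_cons b (D.erase q) hEne, hmin, hcomm]
      simp only [lsB, lastFlag_succ b n, hLst]
      linarith

lemma crossoutStrategy_eq (D : Finset (ℝ × ℝ)) : crossoutStrategy D = lastM true D := rfl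

lemma lastFlag_of_even {n : ℕ} (h : Even n) : lastFlag true n = false := by
  have : ¬ Odd n := by simpa [Nat.not_odd_iff_even] using h
  simp [lastFlag, this]

lemma lastFlag_of_odd {n : ℕ} (h : Odd n) : lastFlag true n = true := by
  simp [lastFlag, h]

lemma ccA : ∀ (n : ℕ) (D : Finset (ℝ × ℝ)), TotallyOrderedPrefs D → D.card = n →
    scoreA crossoutStrategy crossoutStrategy n D = lsA true (coAux true D) := by
  intro n
  induction n with
  | zero =>
    intro D hD hc
    rw [Finset.card_eq_zero] at hc; subst hc
    simp [scoreA, coAux_empty, lsA]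
  | succ n ih =>
    intro D hD hc
    have hne : D.Nonempty := by rw [← Finset.card_pos, hc]; omega
    have hL : lastM true D ∈ D := lastM_mem true D hne
    have hEcard : (D.erase (lastM true D)).card = n := by
      rw [Finset.card_erase_of_mem hL, hc]; omega
    have htr : coAux true D = coAux true (D.erase (lastM true D)) ++ [lastM true D] :=
      coAux_trunc (n + 1) true D hD hc hne
    have hlen : (coAux true (D.erase (lastM true D))).length = n := coAux_length n true _ hEcard
    have happ := lsA_append (lastM true D) (coAux true (D.erase (lastM true D))) true
    rw [hlen] at happ
    have hihE := ih (D.erase (lastM true D)) (top_subset (Finset.erase_subset _ _) hD) hEcard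
    simp only [scoreA, if_pos hne, crossoutStrategy_eq, hc]
    by_cases hpar : Even (n + 1)
    · rw [if_pos hpar, hihE, htr, happ, lastFlag_of_even hpar]
      norm_num
      ring
    · rw [if_neg hpar, hihE, htr, happ,
        lastFlag_of_odd (Nat.not_even_iff_odd.1 hpar)]
      norm_num

lemma ccB : ∀ (n : ℕ) (D : Finset (ℝ × ℝ)), TotallyOrderedPrefs D → D.card = n →
    scoreB crossoutStrategy crossoutStrategy n D = lsB true (coAux true D) := by
  intro n
  induction n with
  | zero =>
    intro D hD hc
    rw [Finset.card_eq_zero] at hc; subst hc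
    simp [scoreB, coAux_empty, lsB]
  | succ n ih =>
    intro D hD hc
    have hne : D.Nonempty := by rw [← Finset.card_pos, hc]; omega
    have hL : lastM true D ∈ D := lastM_mem true D hne
    have hEcard : (D.erase (lastM true D)).card = n := by
      rw [Finset.card_erase_of_mem hL, hc]; omega
    have htr : coAux true D = coAux true (D.erase (lastM true D)) ++ [lastM true D] :=
      coAux_trunc (n + 1) true D hD hc hne
    have hlen : (coAux true (D.erase (lastM true D))).length = n := coAux_length n true _ hEcard
    have happ := lsB_append (lastM true D) (coAux true (D.erase (lastM true D))) true
    rw [hlen] at happ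
    have hihE := ih (D.erase (lastM true D)) (top_subset (Finset.erase_subset _ _) hD) hEcard
    simp only [scoreB, if_pos hne, crossoutStrategy_eq, hc]
    by_cases hpar : Odd (n + 1)
    · rw [if_pos hpar, hihE, htr, happ, lastFlag_of_odd hpar]
      norm_num
      ring
    · rw [if_neg hpar, hihE, htr, happ,
        lastFlag_of_even (Nat.not_odd_iff_even.1 hpar)]
      norm_num

lemma mainA (s : Finset (ℝ × ℝ) → ℝ × ℝ) (hs : ∀ E : Finset (ℝ × ℝ), E.Nonempty → s E ∈ E) :
    ∀ (n : ℕ) (D : Finset (ℝ × ℝ)), TotallyOrderedPrefs D → D.card = n →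
    scoreA s crossoutStrategy n D ≤ lsA true (coAux true D) := by
  intro n
  induction n with
  | zero =>
    intro D hD hc
    rw [Finset.card_eq_zero] at hc; subst hc
    simp [scoreA, coAux_empty, lsA]
  | succ n ih =>
    intro D hD hc
    have hne : D.Nonempty := by rw [← Finset.card_pos, hc]; omega
    simp only [scoreA, if_pos hne, crossoutStrategy_eq, hc]
    by_cases hpar : Even (n + 1)
    · rw [if_pos hpar]
      have hsD := hs D hne
      have hEcard : (D.erase (s D)).card = n := by
        rw [Finset.card_erase_of_mem hsD, hc]; omega
      have h1 := ih (D.erase (s D)) (top_subset (Finset.erase_subset _ _) hD) hEcard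
      have h2 := keyA (n + 1) true D (s D) hD hsD hc
      rw [lastFlag_of_even hpar] at h2
      norm_num at h2
      linarith
    · rw [if_neg hpar]
      have hL : lastM true D ∈ D := lastM_mem true D hne
      have hEcard : (D.erase (lastM true D)).card = n := by
        rw [Finset.card_erase_of_mem hL, hc]; omega
      have htr : coAux true D = coAux true (D.erase (lastM true D)) ++ [lastM true D] :=
        coAux_trunc (n + 1) true D hD hc hne
      have hlen : (coAux true (D.erase (lastM true D))).length = n := coAux_length n true _ hEcard
      have happ := lsA_append (lastM true D) (coAux true (D.erase (lastM true D))) true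
      rw [hlen, lastFlag_of_odd (Nat.not_even_iff_odd.1 hpar)] at happ
      norm_num at happ
      have h1 := ih (D.erase (lastM true D)) (top_subset (Finset.erase_subset _ _) hD) hEcard
      rw [htr, happ]
      exact h1

lemma mainB (s : Finset (ℝ × ℝ) → ℝ × ℝ) (hs : ∀ E : Finset (ℝ × ℝ), E.Nonempty → s E ∈ E) :
    ∀ (n : ℕ) (D : Finset (ℝ × ℝ)), TotallyOrderedPrefs D → D.card = n →
    scoreB s crossoutStrategy n D ≤ lsB true (coAux true D) := by
  intro n
  induction n with
  | zero =>
    intro D hD hc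
    rw [Finset.card_eq_zero] at hc; subst hc
    simp [scoreB, coAux_empty, lsB]
  | succ n ih =>
    intro D hD hc
    have hne : D.Nonempty := by rw [← Finset.card_pos, hc]; omega
    simp only [scoreB, if_pos hne, crossoutStrategy_eq, hc]
    by_cases hpar : Odd (n + 1)
    · rw [if_pos hpar]
      have hsD := hs D hne
      have hEcard : (D.erase (s D)).card = n := by
        rw [Finset.card_erase_of_mem hsD, hc]; omega
      have h1 := ih (D.erase (s D)) (top_subset (Finset.erase_subset _ _) hD) hEcard
      have h2 := keyB (n + 1) true D (s D) hD hsD hc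
      rw [lastFlag_of_odd hpar] at h2
      norm_num at h2
      linarith
    · rw [if_neg hpar]
      have hL : lastM true D ∈ D := lastM_mem true D hne
      have hEcard : (D.erase (lastM true D)).card = n := by
        rw [Finset.card_erase_of_mem hL, hc]; omega
      have htr : coAux true D = coAux true (D.erase (lastM true D)) ++ [lastM true D] :=
        coAux_trunc (n + 1) true D hD hc hne
      have hlen : (coAux true (D.erase (lastM true D))).length = n := coAux_length n true _ hEcard
      have happ := lsB_append (lastM true D) (coAux true (D.erase (lastM true D))) true
      rw [hlen, lastFlag_of_even (Nat.not_odd_iff_even.1 hpar)] at happ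
      norm_num at happ
      have h1 := ih (D.erase (lastM true D)) (top_subset (Finset.erase_subset _ _) hD) hEcard
      rw [htr, happ]
      exact h1

/-- Kohler–Chandrasekaran: the pair (crossout, crossout) is a subgame perfect
equilibrium of Ethiopian Dinner. -/
theorem crossout_equilibrium (D : Finset (ℝ × ℝ)) (hD : TotallyOrderedPrefs D)
    (s : Finset (ℝ × ℝ) → ℝ × ℝ) (hs : ∀ E : Finset (ℝ × ℝ), E.Nonempty → s E ∈ E) :
    vA s crossoutStrategy D ≤ vA crossoutStrategy crossoutStrategy D ∧
    vB s crossoutStrategy D ≤ vB crossoutStrategy crossoutStrategy D := by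
  constructor
  · have h1 := mainA s hs D.card D hD rfl
    have h2 := ccA D.card D hD rfl
    unfold vA
    rw [h2]
    exact h1
  · have h1 := mainB s hs D.card D hD rfl
    have h2 := ccB D.card D hD rfl
    unfold vB
    rw [h2]
    exact h1
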